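/- Let m ∈ ℝ^N with centered version m̄ and suppose min_{1 ≤ k ≤ N−1} Σ_{j=1}^k m̄_j > 0. Set κ := N^{-1/2} min_{1 ≤ k ≤ N−1} Σ_{j=1}^k m̄_j > 0. Then for every x ∈ ℝ^N with x_1 + ... + x_N = 0, we have − Σ_{k=1}^{N−1} (x_{p_x(k+1)} − x_{p_x(k)}) Σ_{j=1}^k m̄_j ≤ −κ ‖x‖, where ‖·‖ is the Euclidean norm. -/

import Mathlib

open Finset

lemma tele_fin : ∀ (n : ℕ) (g : Fin (n+1) → ℝ),
    ∑ k : Fin n, (g k.succ - g k.castSucc) = g (Fin.last n) - g 0 := by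
  intro n
  induction n with
  | zero => intro g; simp
  | succ n ih =>
    intro g
    rw [Fin.sum_univ_castSucc]
    have : ∀ k : Fin n, g k.castSucc.succ - g k.castSucc.castSucc
        = (g ∘ Fin.castSucc) k.succ - (g ∘ Fin.castSucc) k.castSucc := by
      intro k; simp only [Function.comp_apply, Fin.succ_castSucc]
    simp_rw [this]
    rw [ih (g ∘ Fin.castSucc)]
    simp [Fin.succ_last]

/-- If the prefix sums of the centered drifts `m̄` are positive, then with
`κ := N^{-1/2} · min_{1≤k≤N−1} Σ_{j=1}^k m̄_j > 0`, for every centered `x ∈ Π`: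
`− Σ_{k=1}^{N−1} (x_{p_x(k+1)} − x_{p_x(k)}) Σ_{j=1}^k m̄_j ≤ −κ‖x‖`.
Here `N = n + 1 ≥ 2` and `‖x‖` is the Euclidean norm. -/
theorem drift_upper_estimate (n : ℕ) (hn : 1 ≤ n)
    (m : Fin (n + 1) → ℝ)
    (hmin : 0 < ⨅ k : Fin n, ∑ j ∈ Finset.Iic k.castSucc,
        (m j - (∑ i, m i) / (n + 1)))
    (x : EuclideanSpace ℝ (Fin (n + 1))) (hx : ∑ i, x i = 0)
    (p : Equiv.Perm (Fin (n + 1)))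
    (hp1 : ∀ i j : Fin (n + 1), i < j → x (p i) ≤ x (p j))
    (hp2 : ∀ i j : Fin (n + 1), i < j → x (p i) = x (p j) → p i < p j) :
    - ∑ k : Fin n, (x (p k.succ) - x (p k.castSucc)) *
        ∑ j ∈ Finset.Iic k.castSucc, (m j - (∑ i, m i) / (n + 1)) ≤
      - ((Real.sqrt (n + 1))⁻¹ *
          ⨅ k : Fin n, ∑ j ∈ Finset.Iic k.castSucc,
            (m j - (∑ i, m i) / (n + 1))) * ‖x‖ := by
  set S : Fin n → ℝ := fun k => ∑ j ∈ Finset.Iic k.castSucc,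
      (m j - (∑ i, m i) / (n + 1)) with hS
  set μ : ℝ := ⨅ k : Fin n, S k with hμ
  have hne : Nonempty (Fin n) := ⟨⟨0, hn⟩⟩
  have hμle : ∀ k : Fin n, μ ≤ S k := fun k =>
    ciInf_le (Set.Finite.bddBelow (Set.finite_range S)) k
  -- bounds
  set M : ℝ := x (p (Fin.last n)) with hM
  set m0 : ℝ := x (p 0) with hm0
  have hle : ∀ i, m0 ≤ x i ∧ x i ≤ M := by
    intro i
    have h1 : x i = x (p (p.symm i)) := (congrArg x (p.apply_symm_apply i)).symm
    constructor
    · rcases eq_or_lt_of_le (Fin.zero_le (p.symm i)) with h | h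
      · rw [h1, ← h]
      · rw [h1]; exact hp1 _ _ h
    · rcases eq_or_lt_of_le (Fin.le_last (p.symm i)) with h | h
      · rw [h1, h]
      · rw [h1]; exact hp1 _ _ h
  have hm0neg : m0 ≤ 0 := by
    by_contra h
    push_neg at h
    have : 0 < ∑ i, x i := Finset.sum_pos (fun i _ => lt_of_lt_of_le h (hle i).1)
      univ_nonempty
    linarith [hx ▸ this]
  have hMpos : 0 ≤ M := by
    by_contra h
    push_neg at h
    have : ∑ i, x i < 0 := Finset.sum_neg (fun i _ => lt_of_le_of_lt (hle i).2 h)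
      univ_nonempty
    linarith [hx ▸ this]
  have hgap : ∀ i, |x i| ≤ M - m0 := by
    intro i
    rw [abs_le]
    constructor
    · linarith [(hle i).1]
    · linarith [(hle i).2]
  -- norm bound
  have hnorm : ‖x‖ ≤ Real.sqrt (n + 1) * (M - m0) := by
    have h1 : ‖x‖ = Real.sqrt (∑ i, ‖x i‖ ^ 2) := EuclideanSpace.norm_eq x
    rw [h1]
    have h2 : ∑ i, ‖x i‖ ^ 2 ≤ (n + 1) * (M - m0) ^ 2 := by
      calc ∑ i, ‖x i‖ ^ 2 ≤ ∑ _i : Fin (n+1), (M - m0) ^ 2 := by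
            apply Finset.sum_le_sum
            intro i _
            have := hgap i
            have h0 : |x i| ^ 2 ≤ (M - m0)^2 := by
              apply sq_le_sq' <;> [linarith [abs_nonneg (x i)]; exact this]
            simpa [Real.norm_eq_abs] using h0
        _ = (n + 1) * (M - m0) ^ 2 := by
            rw [Finset.sum_const, Finset.card_fin, nsmul_eq_mul]; push_cast; ring
    calc Real.sqrt (∑ i, ‖x i‖ ^ 2) ≤ Real.sqrt ((n + 1) * (M - m0) ^ 2) :=
          Real.sqrt_le_sqrt h2
      _ = Real.sqrt (n + 1) * (M - m0) := by
          rw [Real.sqrt_mul (by positivity)]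
          congr 1
          exact Real.sqrt_sq (by linarith)
  -- sum lower bound
  have hsumge : μ * (M - m0) ≤ ∑ k : Fin n, (x (p k.succ) - x (p k.castSucc)) * S k := by
    have htele : ∑ k : Fin n, (x (p k.succ) - x (p k.castSucc)) = M - m0 := by
      exact tele_fin n (fun i => x (p i))
    calc μ * (M - m0) = ∑ k : Fin n, μ * (x (p k.succ) - x (p k.castSucc)) := by
          rw [← Finset.mul_sum, htele]
      _ ≤ ∑ k : Fin n, (x (p k.succ) - x (p k.castSucc)) * S k := by
          apply Finset.sum_le_sum
          intro k _
          have hgk : 0 ≤ x (p k.succ) - x (p k.castSucc) :=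
            sub_nonneg.mpr (hp1 _ _ (@Fin.castSucc_lt_succ _ k))
          rw [mul_comm]
          exact mul_le_mul_of_nonneg_left (hμle k) hgk
  -- conclude
  rw [neg_mul, neg_le_neg_iff]
  have hsqrt : (0:ℝ) < Real.sqrt (n + 1) := by positivity
  calc (Real.sqrt (n + 1))⁻¹ * μ * ‖x‖
      ≤ (Real.sqrt (n + 1))⁻¹ * μ * (Real.sqrt (n + 1) * (M - m0)) := by
        apply mul_le_mul_of_nonneg_left hnorm
        positivity
    _ = μ * (M - m0) := by
        field_simp
    _ ≤ _ := hsumge
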